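/- arXiv:2110.04822 — 2 statements merged into one kernel-verified Lean document; each statement's English description precedes it below -/
import Mathlib

section
/- Let g: ℝᵈ → ℝ. If x ↦ ½|x|² − g(x) is convex, then y ↦ g*(y) − ½|y|² is convex, where g* is the Legendre–Fenchel transform of g. -/
/-- Lemma A.2(i) (lm_HJ_cx_duality): if ½|x|² − g is convex then g* − ½|y|² is
convex (as an extended-real-valued function, convexity stated pointwise). -/
theorem stmt_6 {d : ℕ} (g : EuclideanSpace ℝ (Fin d) → ℝ)
    (hg : ConvexOn ℝ Set.univ (fun x => (1 / 2 : ℝ) * ‖x‖ ^ 2 - g x)) :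
    ∀ F : EuclideanSpace ℝ (Fin d) → EReal,
      (∀ z, F z = (⨆ w, (((inner ℝ w z : ℝ) - g w : ℝ) : EReal))
          - (((1 / 2 : ℝ) * ‖z‖ ^ 2 : ℝ) : EReal)) →
      ∀ x y : EuclideanSpace ℝ (Fin d), ∀ a b : ℝ, 0 ≤ a → 0 ≤ b → a + b = 1 →
        F (a • x + b • y) ≤ ((a : ℝ) : EReal) * F x + ((b : ℝ) : EReal) * F y := by
  intro F hF x y a b ha hb hab
  set z : EuclideanSpace ℝ (Fin d) := a • x + b • y with hz
  -- the key real inequality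
  have key : ∀ u : EuclideanSpace ℝ (Fin d),
      ((inner ℝ (z + u) z : ℝ) - g (z + u)) - (1 / 2 : ℝ) * ‖z‖ ^ 2 ≤
        a * (((inner ℝ (x + u) x : ℝ) - g (x + u)) - (1 / 2 : ℝ) * ‖x‖ ^ 2)
        + b * (((inner ℝ (y + u) y : ℝ) - g (y + u)) - (1 / 2 : ℝ) * ‖y‖ ^ 2) := by
    intro u
    have hzu : a • (x + u) + b • (y + u) = z + u := by
      rw [smul_add, smul_add, hz]
      rw [show a • x + a • u + (b • y + b • u) = (a • x + b • y) + (a + b) • u by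
        rw [add_smul]; abel]
      rw [hab, one_smul]
    have hconv := hg.2 (Set.mem_univ (x + u)) (Set.mem_univ (y + u)) ha hb hab
    rw [hzu] at hconv
    simp only [smul_eq_mul] at hconv
    -- identities: ⟪v+u, v⟫ - ½‖v‖² = ½‖v+u‖² - ½‖u‖²
    have iden : ∀ v : EuclideanSpace ℝ (Fin d),
        (inner ℝ (v + u) v : ℝ) - (1 / 2 : ℝ) * ‖v‖ ^ 2
          = (1 / 2 : ℝ) * ‖v + u‖ ^ 2 - (1 / 2 : ℝ) * ‖u‖ ^ 2 := by
      intro v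
      have h1 : ‖v + u‖ ^ 2 = ‖v‖ ^ 2 + 2 * (inner ℝ v u : ℝ) + ‖u‖ ^ 2 :=
        norm_add_sq_real v u
      have h2 : (inner ℝ (v + u) v : ℝ) = (inner ℝ v v : ℝ) + (inner ℝ u v : ℝ) :=
        inner_add_left v u v
      have h3 : (inner ℝ v v : ℝ) = ‖v‖ ^ 2 := real_inner_self_eq_norm_sq v
      have h4 : (inner ℝ u v : ℝ) = (inner ℝ v u : ℝ) := real_inner_comm v u
      rw [h2, h3, h4, h1]; ring
    have e0 := iden z
    have e1 := iden x
    have e2 := iden y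
    have hr : a * (((1 / 2 : ℝ) * ‖x + u‖ ^ 2 - g (x + u)) - (1 / 2 : ℝ) * ‖u‖ ^ 2)
        + b * (((1 / 2 : ℝ) * ‖y + u‖ ^ 2 - g (y + u)) - (1 / 2 : ℝ) * ‖u‖ ^ 2)
        = (a * ((1 / 2 : ℝ) * ‖x + u‖ ^ 2 - g (x + u))
          + b * ((1 / 2 : ℝ) * ‖y + u‖ ^ 2 - g (y + u))) - (1 / 2 : ℝ) * ‖u‖ ^ 2 := by
      linear_combination (-((1 / 2 : ℝ) * ‖u‖ ^ 2)) * hab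
    have gl : ((inner ℝ (z + u) z : ℝ) - g (z + u)) - (1 / 2 : ℝ) * ‖z‖ ^ 2
        = ((1 / 2 : ℝ) * ‖z + u‖ ^ 2 - g (z + u)) - (1 / 2 : ℝ) * ‖u‖ ^ 2 := by
      linarith [e0]
    have gr1 : ((inner ℝ (x + u) x : ℝ) - g (x + u)) - (1 / 2 : ℝ) * ‖x‖ ^ 2
        = ((1 / 2 : ℝ) * ‖x + u‖ ^ 2 - g (x + u)) - (1 / 2 : ℝ) * ‖u‖ ^ 2 := by
      linarith [e1]
    have gr2 : ((inner ℝ (y + u) y : ℝ) - g (y + u)) - (1 / 2 : ℝ) * ‖y‖ ^ 2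
        = ((1 / 2 : ℝ) * ‖y + u‖ ^ 2 - g (y + u)) - (1 / 2 : ℝ) * ‖u‖ ^ 2 := by
      linarith [e2]
    rw [gl, gr1, gr2, hr]
    linarith [hconv]
  -- EReal part
  have hFb : ∀ v u : EuclideanSpace ℝ (Fin d),
      ((((inner ℝ (v + u) v : ℝ) - g (v + u)) - (1 / 2 : ℝ) * ‖v‖ ^ 2 : ℝ) : EReal) ≤ F v := by
    intro v u
    rw [hF v]
    have h1 : (((inner ℝ (v + u) v : ℝ) - g (v + u) : ℝ) : EReal)
        ≤ ⨆ w, (((inner ℝ w v : ℝ) - g w : ℝ) : EReal) :=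
      le_iSup (fun w => (((inner ℝ w v : ℝ) - g w : ℝ) : EReal)) (v + u)
    calc ((((inner ℝ (v + u) v : ℝ) - g (v + u)) - (1 / 2 : ℝ) * ‖v‖ ^ 2 : ℝ) : EReal)
        = (((inner ℝ (v + u) v : ℝ) - g (v + u) : ℝ) : EReal)
            - (((1 / 2 : ℝ) * ‖v‖ ^ 2 : ℝ) : EReal) := by
          rw [← EReal.coe_sub]
      _ ≤ _ := by
          rw [sub_eq_add_neg, sub_eq_add_neg]
          exact add_le_add_left h1 _
  rw [hF z]
  rw [EReal.sub_le_iff_le_add (Or.inl (EReal.coe_ne_bot _)) (Or.inl (EReal.coe_ne_top _))]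
  apply iSup_le
  intro w
  have hw : z + (w - z) = w := by abel
  calc (((inner ℝ w z : ℝ) - g w : ℝ) : EReal)
      = (((((inner ℝ w z : ℝ) - g w) - (1 / 2 : ℝ) * ‖z‖ ^ 2 : ℝ)) : EReal)
        + (((1 / 2 : ℝ) * ‖z‖ ^ 2 : ℝ) : EReal) := by
        rw [← EReal.coe_add]; norm_num
    _ ≤ (((a : ℝ) : EReal) * F x + ((b : ℝ) : EReal) * F y)
        + (((1 / 2 : ℝ) * ‖z‖ ^ 2 : ℝ) : EReal) := by
        apply add_le_add_left
        have hk := key (w - z)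
        rw [hw] at hk
        calc ((((inner ℝ w z : ℝ) - g w) - (1 / 2 : ℝ) * ‖z‖ ^ 2 : ℝ) : EReal)
            ≤ ((a * (((inner ℝ (x + (w - z)) x : ℝ) - g (x + (w - z)))
                  - (1 / 2 : ℝ) * ‖x‖ ^ 2)
              + b * (((inner ℝ (y + (w - z)) y : ℝ) - g (y + (w - z)))
                  - (1 / 2 : ℝ) * ‖y‖ ^ 2) : ℝ) : EReal) := EReal.coe_le_coe_iff.2 hk
          _ = ((a : ℝ) : EReal) * ((((inner ℝ (x + (w - z)) x : ℝ) - g (x + (w - z)))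
                  - (1 / 2 : ℝ) * ‖x‖ ^ 2 : ℝ) : EReal)
              + ((b : ℝ) : EReal) * ((((inner ℝ (y + (w - z)) y : ℝ) - g (y + (w - z)))
                  - (1 / 2 : ℝ) * ‖y‖ ^ 2 : ℝ) : EReal) := by
              rw [← EReal.coe_mul, ← EReal.coe_mul, ← EReal.coe_add]
          _ ≤ ((a : ℝ) : EReal) * F x + ((b : ℝ) : EReal) * F y := by
              apply add_le_add
              · exact mul_le_mul_of_nonneg_left (hFb x (w - z))
                  (by exact_mod_cast ha)
              · exact mul_le_mul_of_nonneg_left (hFb y (w - z))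
                  (by exact_mod_cast hb)
end

section
/- Let μ ∈ P₂(ℝᵈ), ν ∈ P₂^{ac}(ℝᵈ), and suppose there exists a convex expansion φ (i.e., φ = ξ* for some proper ξ with D²ξ ≤ Id distributionally; equivalently D²φ ≥ Id) such that (∇φ)_# ν = μ. Then the forward projection of ν onto the cone P^{cx}_{2,μ≤} = { ξ ∈ P₂(ℝᵈ) : μ ≤_cx ξ } with respect to quadratic Wasserstein cost coincides with μ; that is, 𝒯₂(μ, ν) = inf { 𝒯₂(ξ, ν) : ξ ∈ P₂(ℝᵈ), μ ≤_cx ξ }. -/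
open MeasureTheory Metric Set
open scoped ENNReal RealInnerProductSpace

/-- Convex order between measures on Euclidean space, tested against Lipschitz
convex functions (an equivalent defining class, cf. Lemma 5.2 of the paper). -/
def CxOrder {d : ℕ} (η ν : Measure (EuclideanSpace ℝ (Fin d))) : Prop :=
  ∀ φ : EuclideanSpace ℝ (Fin d) → ℝ,
    ConvexOn ℝ Set.univ φ → (∃ K, LipschitzWith K φ) →
    ∫ x, φ x ∂η ≤ ∫ x, φ x ∂ν

/-- The quadratic transportation cost `𝒯₂(ρ, σ)`. -/
noncomputable def T2 {d : ℕ} (ρ σ : Measure (EuclideanSpace ℝ (Fin d))) : ℝ≥0∞ :=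
  ⨅ (π : Measure (EuclideanSpace ℝ (Fin d) × EuclideanSpace ℝ (Fin d)))
    (_ : IsProbabilityMeasure π) (_ : π.map Prod.fst = ρ) (_ : π.map Prod.snd = σ),
    ∫⁻ p, ENNReal.ofReal (‖p.1 - p.2‖ ^ 2) ∂π

variable {d : ℕ}

local notation "E" => EuclideanSpace ℝ (Fin d)

/-- Subgradient inequality for a convex function at a point of differentiability. -/
lemma subgrad {f : EuclideanSpace ℝ (Fin d) → ℝ} (hf : ConvexOn ℝ Set.univ f)
    {w : EuclideanSpace ℝ (Fin d)} (hd : DifferentiableAt ℝ f w)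
    (z : EuclideanSpace ℝ (Fin d)) :
    f w + ⟪gradient f w, z - w⟫ ≤ f z := by
  set v := z - w with hv
  set h : ℝ → ℝ := fun t => f (w + t • v) with hh
  have hA : HasDerivAt (fun t : ℝ => w + t • v) v 0 := by
    simpa using (((hasDerivAt_id (0:ℝ)).smul_const v).const_add w)
  have hF : HasFDerivAt f (fderiv ℝ f w) w := hd.hasFDerivAt
  have hcomp : HasDerivAt h (fderiv ℝ f w v) 0 := by
    have : HasFDerivAt f (fderiv ℝ f w) ((fun t : ℝ => w + t • v) 0) := by
      simpa using hF
    exact this.comp_hasDerivAt 0 hA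
  have hgrad : fderiv ℝ f w v = ⟪gradient f w, v⟫ := by
    have h1 : HasFDerivAt f ((InnerProductSpace.toDual ℝ (EuclideanSpace ℝ (Fin d))) (gradient f w)) w :=
      hasGradientAt_iff_hasFDerivAt.mp hd.hasGradientAt
    rw [h1.fderiv]
    simp [InnerProductSpace.toDual_apply_apply]
  have hconv : ConvexOn ℝ Set.univ h := by
    have := hf.comp_affineMap (AffineMap.lineMap w z : ℝ →ᵃ[ℝ] EuclideanSpace ℝ (Fin d))
    have heq : h = f ∘ (AffineMap.lineMap w z : ℝ →ᵃ[ℝ] EuclideanSpace ℝ (Fin d)) := by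
      funext t
      simp [hh, AffineMap.lineMap_apply_module, hv]
      ring_nf
      congr 1
      module
    rw [heq]
    simpa using this
  have hslope : deriv h 0 ≤ slope h 0 1 :=
    hconv.deriv_le_slope (mem_univ _) (mem_univ _) zero_lt_one hcomp.differentiableAt
  have h0 : h 0 = f w := by simp [hh]
  have h1 : h 1 = f z := by simp [hh, hv]
  have hder : deriv h 0 = ⟪gradient f w, v⟫ := by rw [hcomp.deriv, hgrad]
  have hs : slope h 0 1 = f z - f w := by
    rw [slope_def_field]; simp [h0, h1]
  rw [hder, hs] at hslope
  linarith

/-- A convex function on Euclidean space is differentiable almost everywhere. -/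
lemma convex_ae_diff {f : EuclideanSpace ℝ (Fin d) → ℝ} (hf : ConvexOn ℝ Set.univ f) :
    ∀ᵐ x ∂(volume : Measure (EuclideanSpace ℝ (Fin d))), DifferentiableAt ℝ f x := by
  rw [ae_iff]
  set D := {x : EuclideanSpace ℝ (Fin d) | ¬ DifferentiableAt ℝ f x} with hD
  apply measure_null_of_locally_null
  intro x _
  obtain ⟨K, t, ht, hlip⟩ := hf.locallyLipschitz x
  obtain ⟨r, hr, hball⟩ := Metric.mem_nhds_iff.mp ht
  have hlipb : LipschitzOnWith K f (ball x r) := hlip.mono hball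
  have hae := hlipb.ae_differentiableWithinAt_of_mem (μ := volume)
  refine ⟨D ∩ ball x r, Filter.inter_mem self_mem_nhdsWithin
    (mem_nhdsWithin_of_mem_nhds (ball_mem_nhds x hr)), ?_⟩
  refine measure_mono_null (fun y hy => ?_) (ae_iff.mp hae)
  simp only [mem_setOf_eq, not_forall]
  rcases hy with ⟨hyD, hyb⟩
  refine ⟨hyb, fun hdw => hyD (hdw.differentiableAt (isOpen_ball.mem_nhds hyb))⟩

/-- An infimal convolution type construction is convex. -/
lemma convexOn_iInf {α : Type*} [AddCommGroup α] [Module ℝ α] [TopologicalSpace α]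
    {F : α → α → ℝ}
    (hcx : ∀ x1 x2 y1 y2 (a b : ℝ), 0 ≤ a → 0 ≤ b → a + b = 1 →
      F (a•x1+b•x2) (a•y1+b•y2) ≤ a * F x1 y1 + b * F x2 y2)
    (hbdd : ∀ x, BddBelow (Set.range (F x))) :
    ConvexOn ℝ Set.univ (fun x => ⨅ y, F x y) := by
  refine ⟨convex_univ, fun x1 _ x2 _ a b ha hb hab => ?_⟩
  simp only [smul_eq_mul]
  rcases eq_or_lt_of_le ha with ha0 | ha
  · have hb1 : b = 1 := by linarith
    simp [← ha0, hb1]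
  rcases eq_or_lt_of_le hb with hb0 | hb
  · have ha1 : a = 1 := by linarith
    simp [← hb0, ha1]
  have key : ∀ y1 y2, (⨅ y, F (a•x1+b•x2) y) ≤ a * F x1 y1 + b * F x2 y2 := fun y1 y2 =>
    (ciInf_le (hbdd _) (a•y1+b•y2)).trans (hcx x1 x2 y1 y2 a b ha.le hb.le hab)
  have step1 : ∀ y1, (⨅ y, F (a•x1+b•x2) y) ≤ a * F x1 y1 + b * ⨅ y, F x2 y := by
    intro y1
    have h2 : ∀ y2, ((⨅ y, F (a•x1+b•x2) y) - a * F x1 y1)/b ≤ F x2 y2 := by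
      intro y2; rw [div_le_iff₀ hb]; have := key y1 y2; nlinarith [key y1 y2]
    have := le_ciInf h2
    rw [div_le_iff₀ hb] at this
    nlinarith
  have h1 : ∀ y1, ((⨅ y, F (a•x1+b•x2) y) - b * ⨅ y, F x2 y)/a ≤ F x1 y1 := by
    intro y1; rw [div_le_iff₀ ha]; nlinarith [step1 y1]
  have := le_ciInf h1
  rw [div_le_iff₀ ha] at this
  nlinarith

/-- Existence of an affine minorant for a convex function. -/
lemma exists_affine_minorant {f : EuclideanSpace ℝ (Fin d) → ℝ} (hf : ConvexOn ℝ Set.univ f)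
    (subgrad : ∀ {g : EuclideanSpace ℝ (Fin d) → ℝ}, ConvexOn ℝ Set.univ g →
      ∀ {w : EuclideanSpace ℝ (Fin d)}, DifferentiableAt ℝ g w →
      ∀ z, g w + ⟪gradient g w, z - w⟫ ≤ g z)
    (convex_ae_diff : ∀ᵐ x ∂(volume : Measure (EuclideanSpace ℝ (Fin d))), DifferentiableAt ℝ f x) :
    ∃ p c, ∀ z, c + ⟪p, z⟫ ≤ f z := by
  have hvol : (volume : Measure (EuclideanSpace ℝ (Fin d))) ≠ 0 := by
    intro h0
    have : (0:ℝ≥0∞) < volume (ball (0 : EuclideanSpace ℝ (Fin d)) 1) :=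
      measure_ball_pos _ _ one_pos
    rw [h0] at this; simp at this
  have : (MeasureTheory.ae (volume : Measure (EuclideanSpace ℝ (Fin d)))).NeBot :=
    ae_neBot.mpr hvol
  obtain ⟨w, hw⟩ := convex_ae_diff.exists
  refine ⟨gradient f w, f w - ⟪gradient f w, w⟫, fun z => ?_⟩
  have := subgrad hf hw z
  rw [inner_sub_right] at this
  linarith

noncomputable def fstar (φ : EuclideanSpace ℝ (Fin d) → ℝ) (x : EuclideanSpace ℝ (Fin d)) : ℝ :=
  ⨆ y, (⟪x, y⟫ - φ y)

section fstar
variable {φ : EuclideanSpace ℝ (Fin d) → ℝ} {p₀ : EuclideanSpace ℝ (Fin d)} {c₀ : ℝ}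
  (hmin : ∀ z, c₀ + ⟪p₀, z⟫ ≤ φ z - (1/2)*‖z‖^2)

include hmin in
lemma fstar_bddAbove (x : EuclideanSpace ℝ (Fin d)) :
    BddAbove (Set.range fun y => ⟪x, y⟫ - φ y) := by
  refine ⟨(1/2)*‖x - p₀‖^2 - c₀, ?_⟩
  rintro v ⟨y, rfl⟩
  dsimp only
  have h1 := hmin y
  have h2 : ⟪x - p₀, y⟫ ≤ ‖x - p₀‖ * ‖y‖ := real_inner_le_norm _ _
  rw [inner_sub_left] at h2
  nlinarith [sq_nonneg (‖x - p₀‖ - ‖y‖)]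

include hmin in
lemma le_fstar (x y : EuclideanSpace ℝ (Fin d)) : ⟪x, y⟫ - φ y ≤ fstar φ x :=
  le_ciSup (fstar_bddAbove hmin x) y

include hmin in
lemma fstar_le (x : EuclideanSpace ℝ (Fin d)) : fstar φ x ≤ (1/2)*‖x - p₀‖^2 - c₀ :=
  ciSup_le fun y => by
    have h1 := hmin y
    have h2 : ⟪x - p₀, y⟫ ≤ ‖x - p₀‖ * ‖y‖ := real_inner_le_norm _ _
    rw [inner_sub_left] at h2
    nlinarith [sq_nonneg (‖x - p₀‖ - ‖y‖)]

include hmin in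
lemma fstar_lower (x : EuclideanSpace ℝ (Fin d)) : -φ 0 ≤ fstar φ x := by
  have := le_fstar hmin x 0
  simpa using this

include hmin in
lemma fstar_moreau (x : EuclideanSpace ℝ (Fin d)) :
    (1/2)*‖x‖^2 - fstar φ x = ⨅ y, ((1/2)*‖x - y‖^2 + (φ y - (1/2)*‖y‖^2)) := by
  have hM : ∀ y, (1/2)*‖x - y‖^2 + (φ y - (1/2)*‖y‖^2) = (1/2)*‖x‖^2 - (⟪x, y⟫ - φ y) := by
    intro y; rw [norm_sub_sq_real]; ring
  have hbddb : BddBelow (Set.range fun y => (1/2)*‖x - y‖^2 + (φ y - (1/2)*‖y‖^2)) := by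
    refine ⟨(1/2)*‖x‖^2 - fstar φ x, ?_⟩
    rintro v ⟨y, rfl⟩
    dsimp only
    rw [hM y]
    have := le_fstar hmin x y; linarith
  apply le_antisymm
  · exact le_ciInf fun y => by rw [hM y]; have := le_fstar hmin x y; linarith
  · have : fstar φ x ≤ (1/2)*‖x‖^2 - ⨅ y, ((1/2)*‖x - y‖^2 + (φ y - (1/2)*‖y‖^2)) := by
      refine ciSup_le fun y => ?_
      have := ciInf_le hbddb y
      rw [hM y] at this; linarith
    linarith

include hmin in
lemma psi_convex (hexp : ConvexOn ℝ Set.univ (fun x => φ x - (1 / 2 : ℝ) * ‖x‖ ^ 2)) :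
    ConvexOn ℝ Set.univ (fun x => ‖x‖^2 - 2 * fstar φ x) := by
  have key : ConvexOn ℝ Set.univ
      (fun x : EuclideanSpace ℝ (Fin d) => ⨅ y, ((1/2)*‖x - y‖^2 + (φ y - (1/2)*‖y‖^2))) := by
    apply convexOn_iInf
    · intro x1 x2 y1 y2 a b ha hb hab
      have hdiff : (a•x1+b•x2) - (a•y1+b•y2) = a•(x1-y1) + b•(x2-y2) := by module
      have hn : ‖(a•x1+b•x2) - (a•y1+b•y2)‖ ≤ a*‖x1-y1‖ + b*‖x2-y2‖ := by
        rw [hdiff]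
        refine (norm_add_le _ _).trans ?_
        rw [norm_smul, norm_smul]
        simp [Real.norm_eq_abs, abs_of_nonneg ha, abs_of_nonneg hb]
      have hsq : ‖(a•x1+b•x2) - (a•y1+b•y2)‖^2 ≤ a*‖x1-y1‖^2 + b*‖x2-y2‖^2 := by
        have h1 : (0:ℝ) ≤ a*‖x1-y1‖ + b*‖x2-y2‖ := by positivity
        nlinarith [sq_nonneg (‖x1-y1‖ - ‖x2-y2‖), mul_nonneg ha hb, norm_nonneg ((a•x1+b•x2) - (a•y1+b•y2))]
      have hg := hexp.2 (Set.mem_univ y1) (Set.mem_univ y2) ha hb hab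
      simp only [smul_eq_mul] at hg
      nlinarith
    · intro x
      refine ⟨(1/2)*‖x‖^2 - fstar φ x, ?_⟩
      rintro v ⟨y, rfl⟩
      dsimp only
      have h1 : (1/2)*‖x - y‖^2 + (φ y - (1/2)*‖y‖^2) = (1/2)*‖x‖^2 - (⟪x, y⟫ - φ y) := by
        rw [norm_sub_sq_real]; ring
      rw [h1]
      have := le_fstar hmin x y; linarith
  have h2 := key.smul (by norm_num : (0:ℝ) ≤ 2)
  have heq : (fun x : EuclideanSpace ℝ (Fin d) => ‖x‖^2 - 2 * fstar φ x)
      = fun x => (2:ℝ) • ⨅ y, ((1/2)*‖x - y‖^2 + (φ y - (1/2)*‖y‖^2)) := by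
    funext x
    rw [← fstar_moreau hmin x]
    simp; ring
  rw [heq]
  exact h2

end fstar

lemma integrable_affine {μ : Measure (EuclideanSpace ℝ (Fin d))} [IsProbabilityMeasure μ]
    (hμ2 : Integrable (fun x => ‖x‖ ^ 2) μ) (p : EuclideanSpace ℝ (Fin d)) (c : ℝ) :
    Integrable (fun x => c + ⟪p, x⟫) μ := by
  refine (integrable_const c).add ?_
  refine Integrable.mono' ((integrable_const (‖p‖ : ℝ)).add (hμ2.const_mul ‖p‖)) ?_ ?_
  · exact (Continuous.inner continuous_const continuous_id).aestronglyMeasurable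
  · refine Filter.Eventually.of_forall fun x => ?_
    have h1 : |⟪p, x⟫| ≤ ‖p‖ * ‖x‖ := abs_real_inner_le_norm _ _
    have h2 : ‖x‖ ≤ 1 + ‖x‖^2 := by nlinarith [sq_nonneg (‖x‖ - 1)]
    have := norm_nonneg p
    calc ‖⟪p, x⟫‖ = |⟪p, x⟫| := rfl
    _ ≤ ‖p‖ * (1 + ‖x‖^2) := by nlinarith
    _ = ‖p‖ + ‖p‖ * ‖x‖^2 := by ring

lemma cx_order_extend {μ ξ : Measure (EuclideanSpace ℝ (Fin d))}
    [IsProbabilityMeasure μ] [IsProbabilityMeasure ξ]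
    (hμ2 : Integrable (fun x => ‖x‖ ^ 2) μ) (hξ2 : Integrable (fun x => ‖x‖ ^ 2) ξ)
    (hcx : CxOrder μ ξ) {ψ : EuclideanSpace ℝ (Fin d) → ℝ} (hψ : ConvexOn ℝ Set.univ ψ)
    (hψμ : Integrable ψ μ) (hψξ : Integrable ψ ξ)
    (p : EuclideanSpace ℝ (Fin d)) (c : ℝ) (hminψ : ∀ x, c + ⟪p, x⟫ ≤ ψ x) :
    ∫ x, ψ x ∂μ ≤ ∫ x, ψ x ∂ξ := by
  set K : ℕ → ℝ := fun n => ‖p‖ + n with hK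
  have hKnn : ∀ n, (0:ℝ) ≤ K n := fun n => by positivity
  have hKp : ∀ n, ‖p‖ ≤ K n := fun n => by simp [hK]
  set f : ℕ → EuclideanSpace ℝ (Fin d) → ℝ := fun n x => ⨅ y, (ψ y + K n * ‖x - y‖) with hf
  have hlb : ∀ n (x y : EuclideanSpace ℝ (Fin d)), c + ⟪p, x⟫ ≤ ψ y + K n * ‖x - y‖ := by
    intro n x y
    have h1 := hminψ y
    have h2 : ⟪p, y⟫ - ⟪p, x⟫ = ⟪p, y - x⟫ := (inner_sub_right p y x).symm
    have h3 : |⟪p, y - x⟫| ≤ ‖p‖ * ‖y - x‖ := abs_real_inner_le_norm _ _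
    have h4 : ‖x - y‖ = ‖y - x‖ := norm_sub_rev _ _
    have h5 := hKp n
    have h6 := abs_le.mp h3
    have h7 : ‖p‖ * ‖y - x‖ ≤ K n * ‖y - x‖ :=
      mul_le_mul_of_nonneg_right h5 (norm_nonneg _)
    rw [h4]; linarith
  have hbdd : ∀ n x, BddBelow (Set.range fun y => ψ y + K n * ‖x - y‖) := by
    intro n x
    exact ⟨c + ⟪p, x⟫, by rintro v ⟨y, rfl⟩; exact hlb n x y⟩
  have hf_le : ∀ n x, f n x ≤ ψ x := by
    intro n x
    have := ciInf_le (hbdd n x) x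
    simpa using this
  have hf_ge : ∀ n x, c + ⟪p, x⟫ ≤ f n x := fun n x => le_ciInf (hlb n x)
  have hmono : ∀ x, Monotone fun n => f n x := by
    intro x n m hnm
    refine ciInf_mono (hbdd n x) fun y => ?_
    have : K n ≤ K m := by simp [hK]; exact_mod_cast hnm
    have := mul_le_mul_of_nonneg_right this (norm_nonneg (x - y))
    linarith
  have haux : ∀ n (x x' : EuclideanSpace ℝ (Fin d)), f n x ≤ f n x' + K n * ‖x - x'‖ := by
    intro n x x'
    have h1 : ∀ y, f n x - K n * ‖x - x'‖ ≤ ψ y + K n * ‖x' - y‖ := by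
      intro y
      have h2 : f n x ≤ ψ y + K n * ‖x - y‖ := ciInf_le (hbdd n x) y
      have h3 : ‖x - y‖ ≤ ‖x - x'‖ + ‖x' - y‖ := norm_sub_le_norm_sub_add_norm_sub x x' y
      have h4 := mul_le_mul_of_nonneg_left h3 (hKnn n)
      nlinarith
    have := le_ciInf h1
    have h5 : f n x - K n * ‖x - x'‖ ≤ f n x' := this
    linarith
  have hlip : ∀ n, LipschitzWith (Real.toNNReal (K n)) (f n) := by
    intro n
    refine LipschitzWith.of_dist_le_mul fun x x' => ?_
    rw [Real.dist_eq, dist_eq_norm]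
    rw [Real.coe_toNNReal _ (hKnn n)]
    have h1 := haux n x x'
    have h2 := haux n x' x
    rw [norm_sub_rev] at h2
    rw [abs_le]; constructor <;> linarith
  have hconv : ∀ n, ConvexOn ℝ Set.univ (f n) := by
    intro n
    apply convexOn_iInf
    · intro x1 x2 y1 y2 a b ha hb hab
      have hdiff : (a•x1+b•x2) - (a•y1+b•y2) = a•(x1-y1) + b•(x2-y2) := by module
      have hn : ‖(a•x1+b•x2) - (a•y1+b•y2)‖ ≤ a*‖x1-y1‖ + b*‖x2-y2‖ := by
        rw [hdiff]
        refine (norm_add_le _ _).trans ?_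
        rw [norm_smul, norm_smul]
        simp [Real.norm_eq_abs, abs_of_nonneg ha, abs_of_nonneg hb]
      have hg := hψ.2 (Set.mem_univ y1) (Set.mem_univ y2) ha hb hab
      simp only [smul_eq_mul] at hg
      have := mul_le_mul_of_nonneg_left hn (hKnn n)
      nlinarith
    · exact hbdd n
  have htend : ∀ x, Filter.Tendsto (fun n => f n x) Filter.atTop (nhds (ψ x)) := by
    intro x
    obtain ⟨L, t, ht, hlipL⟩ := hψ.locallyLipschitz x
    obtain ⟨r, hr, hball⟩ := Metric.mem_nhds_iff.mp ht
    have hlipb : LipschitzOnWith L ψ (ball x r) := hlipL.mono hball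
    have ev1 : ∀ᶠ n : ℕ in Filter.atTop, (L:ℝ) ≤ (n:ℝ) :=
      (tendsto_natCast_atTop_atTop (R := ℝ)).eventually_ge_atTop _
    have ev2 : ∀ᶠ n : ℕ in Filter.atTop, (ψ x - (c + ⟪p, x⟫))/r ≤ (n:ℝ) :=
      (tendsto_natCast_atTop_atTop (R := ℝ)).eventually_ge_atTop _
    have ev : ∀ᶠ n in Filter.atTop, f n x = ψ x := by
      filter_upwards [ev1, ev2] with n h1 h2
      refine le_antisymm (hf_le n x) (le_ciInf fun y => ?_)
      by_cases hy : y ∈ ball x r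
      · have hx : x ∈ ball x r := mem_ball_self hr
        have hd := hlipb.dist_le_mul x hx y hy
        rw [Real.dist_eq, dist_eq_norm] at hd
        have h3 : ψ x - ψ y ≤ (L:ℝ) * ‖x - y‖ := (abs_le.mp hd).2
        have h4 : (L:ℝ) * ‖x - y‖ ≤ K n * ‖x - y‖ := by
          refine mul_le_mul_of_nonneg_right ?_ (norm_nonneg _)
          have := norm_nonneg p
          simp only [hK]; linarith
        linarith
      · have hyr : r ≤ dist y x := by
          by_contra h
          exact hy (by simpa [Metric.mem_ball] using lt_of_not_ge h)
        rw [dist_eq_norm] at hyr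
        have h5 := hlb n x y
        have h6 : ψ y + K n * ‖x - y‖ = (ψ y + ‖p‖ * ‖x - y‖) + n * ‖x - y‖ := by
          simp only [hK]; ring
        have h7 : c + ⟪p, x⟫ ≤ ψ y + ‖p‖ * ‖x - y‖ := by
          have h1' := hminψ y
          have h2' : ⟪p, y⟫ - ⟪p, x⟫ = ⟪p, y - x⟫ := (inner_sub_right p y x).symm
          have h3' : |⟪p, y - x⟫| ≤ ‖p‖ * ‖y - x‖ := abs_real_inner_le_norm _ _
          have h6' := abs_le.mp h3'
          rw [norm_sub_rev x y]; linarith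
        have h8 : (n:ℝ) * r ≤ n * ‖x - y‖ := by
          refine mul_le_mul_of_nonneg_left ?_ (Nat.cast_nonneg n)
          rw [norm_sub_rev]; exact hyr
        have h9 : ψ x - (c + ⟪p, x⟫) ≤ n * r := by
          rw [div_le_iff₀ hr] at h2; linarith
        linarith
    exact Filter.Tendsto.congr' (by filter_upwards [ev] with n h using h.symm) tendsto_const_nhds
  have hint : ∀ (η : Measure (EuclideanSpace ℝ (Fin d))) [IsProbabilityMeasure η],
      Integrable (fun x => ‖x‖ ^ 2) η → Integrable ψ η → ∀ n, Integrable (f n) η := by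
    intro η _ hη2 hψη n
    refine Integrable.mono' (hψη.abs.add (integrable_affine hη2 p c).abs)
      ((hlip n).continuous.aestronglyMeasurable) ?_
    refine Filter.Eventually.of_forall fun x => ?_
    have h1 := hf_le n x
    have h2 := hf_ge n x
    have h3 : ψ x ≤ |ψ x| := le_abs_self _
    have h4 : -(|c + ⟪p, x⟫|) ≤ c + ⟪p, x⟫ := neg_abs_le _
    rw [Real.norm_eq_abs, abs_le]
    constructor <;> simp only [Pi.add_apply] <;> [linarith [abs_nonneg (ψ x)]; linarith [abs_nonneg (c + ⟪p, x⟫)]]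
  have tμ : Filter.Tendsto (fun n => ∫ x, f n x ∂μ) Filter.atTop (nhds (∫ x, ψ x ∂μ)) :=
    integral_tendsto_of_tendsto_of_monotone (hint μ hμ2 hψμ) hψμ
      (Filter.Eventually.of_forall hmono) (Filter.Eventually.of_forall htend)
  have tξ : Filter.Tendsto (fun n => ∫ x, f n x ∂ξ) Filter.atTop (nhds (∫ x, ψ x ∂ξ)) :=
    integral_tendsto_of_tendsto_of_monotone (hint ξ hξ2 hψξ) hψξ
      (Filter.Eventually.of_forall hmono) (Filter.Eventually.of_forall htend)
  exact le_of_tendsto_of_tendsto' tμ tξ fun n => hcx (f n) (hconv n) ⟨_, hlip n⟩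

lemma key_le {d : ℕ} (μ ν : Measure (EuclideanSpace ℝ (Fin d)))
    [IsProbabilityMeasure μ] [IsProbabilityMeasure ν]
    (hμ2 : Integrable (fun x => ‖x‖ ^ 2) μ)
    (hνac : ν ≪ volume)
    (φ : EuclideanSpace ℝ (Fin d) → ℝ)
    (hφconv : ConvexOn ℝ Set.univ φ)
    (hexp : ConvexOn ℝ Set.univ (fun x => φ x - (1 / 2 : ℝ) * ‖x‖ ^ 2))
    (hmap : Measure.map (gradient φ) ν = μ)
    (ξ : Measure (EuclideanSpace ℝ (Fin d))) [IsProbabilityMeasure ξ]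
    (hξ2 : Integrable (fun x => ‖x‖ ^ 2) ξ) (hcx : CxOrder μ ξ) :
    T2 μ ν ≤ T2 ξ ν := by
  obtain ⟨p₀, cg, hming⟩ := exists_affine_minorant hexp
    (fun {g} hg {w} hw z => subgrad hg hw z) (convex_ae_diff hexp)
  have hmin : ∀ z, cg + ⟪p₀, z⟫ ≤ φ z - (1/2)*‖z‖^2 := fun z => hming z
  set ψ : EuclideanSpace ℝ (Fin d) → ℝ := fun x => ‖x‖^2 - 2 * fstar φ x with hψdef
  have hψconv : ConvexOn ℝ Set.univ ψ := psi_convex hmin hexp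
  have hψcont : Continuous ψ := hψconv.locallyLipschitz.continuous
  have hψub : ∀ x, ψ x ≤ ‖x‖^2 + 2*φ 0 := by
    intro x
    have := fstar_lower hmin x
    simp only [hψdef]; linarith
  have hψlb : ∀ x, 2*⟪x, p₀⟫ - ‖p₀‖^2 + 2*cg ≤ ψ x := by
    intro x
    have h1 := fstar_le hmin x
    have h2 : ‖x - p₀‖^2 = ‖x‖^2 - 2*⟪x,p₀⟫ + ‖p₀‖^2 := by rw [norm_sub_sq_real]
    simp only [hψdef]; nlinarith
  have hminψ : ∀ x, (2*cg - ‖p₀‖^2) + ⟪(2:ℝ)•p₀, x⟫ ≤ ψ x := by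
    intro x
    have h1 : ⟪(2:ℝ)•p₀, x⟫ = 2*⟪p₀, x⟫ := real_inner_smul_left _ _ _
    have h2 : ⟪p₀, x⟫ = ⟪x, p₀⟫ := real_inner_comm _ _
    have := hψlb x
    rw [h1, h2]; linarith
  have hψint : ∀ (η : Measure (EuclideanSpace ℝ (Fin d))) [IsProbabilityMeasure η],
      Integrable (fun x => ‖x‖ ^ 2) η → Integrable ψ η := by
    intro η _ hη2
    refine Integrable.mono' ((integrable_const (2*‖p₀‖^2 + 2*|cg| + 2*|φ 0|)).add hη2)
      hψcont.aestronglyMeasurable ?_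
    refine Filter.Eventually.of_forall fun x => ?_
    have h1 := hψub x
    have h2 := hψlb x
    have h3 : |⟪x, p₀⟫| ≤ ‖x‖ * ‖p₀‖ := abs_real_inner_le_norm _ _
    have h4 := abs_le.mp h3
    rw [Real.norm_eq_abs, abs_le]
    constructor <;> simp only [Pi.add_apply]
    · nlinarith [sq_nonneg (‖x‖ - ‖p₀‖), abs_nonneg cg, abs_nonneg (φ 0), neg_abs_le cg, le_abs_self cg]
    · nlinarith [sq_nonneg (‖x‖ - ‖p₀‖), abs_nonneg cg, abs_nonneg (φ 0), le_abs_self (φ 0)]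
  have hψμ : Integrable ψ μ := hψint μ hμ2
  have hψξ : Integrable ψ ξ := hψint ξ hξ2
  have hcore : ∫ x, ψ x ∂μ ≤ ∫ x, ψ x ∂ξ :=
    cx_order_extend hμ2 hξ2 hcx hψconv hψμ hψξ ((2:ℝ)•p₀) (2*cg - ‖p₀‖^2) hminψ
  have hgradm : Measurable (gradient φ) :=
    ((InnerProductSpace.toDual ℝ (EuclideanSpace ℝ (Fin d))).symm.continuous.measurable).comp
      (measurable_fderiv ℝ φ)
  have hdiffν : ∀ᵐ y ∂ν, DifferentiableAt ℝ φ y := hνac.ae_le (convex_ae_diff hφconv)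
  -- the explicit coupling
  set G : EuclideanSpace ℝ (Fin d) → EuclideanSpace ℝ (Fin d) × EuclideanSpace ℝ (Fin d) :=
    fun y => (gradient φ y, y) with hGdef
  have hG : Measurable G := hgradm.prodMk measurable_id
  set π₀ := ν.map G with hπ₀def
  have hπ₀prob : IsProbabilityMeasure π₀ := Measure.isProbabilityMeasure_map hG.aemeasurable
  have hπ₀fst : π₀.map Prod.fst = μ := by
    rw [hπ₀def, Measure.map_map measurable_fst hG]
    exact hmap
  have hπ₀snd : π₀.map Prod.snd = ν := by
    rw [hπ₀def, Measure.map_map measurable_snd hG]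
    simp [hGdef, Function.comp_def, Measure.map_id, Measure.map_id']
  have hcostmE : Measurable (fun p : EuclideanSpace ℝ (Fin d) × EuclideanSpace ℝ (Fin d) =>
      ENNReal.ofReal (‖p.1 - p.2‖ ^ 2)) :=
    ((measurable_fst.sub measurable_snd).norm.pow_const 2).ennreal_ofReal
  have upper : T2 μ ν ≤ ∫⁻ y, ENNReal.ofReal (‖gradient φ y - y‖^2) ∂ν := by
    have h1 : T2 μ ν ≤ ∫⁻ p, ENNReal.ofReal (‖p.1 - p.2‖ ^ 2) ∂π₀ := by
      rw [T2]
      exact iInf_le_of_le π₀ (iInf_le_of_le hπ₀prob (iInf_le_of_le hπ₀fst (iInf_le _ hπ₀snd)))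
    refine h1.trans_eq ?_
    rw [hπ₀def, lintegral_map hcostmE hG]
  have hf2ym : Measurable (fun y => ‖gradient φ y - y‖^2) :=
    ((hgradm.sub measurable_id).norm.pow_const 2)
  -- main inequality for each admissible coupling
  have hle : ∀ π : Measure (EuclideanSpace ℝ (Fin d) × EuclideanSpace ℝ (Fin d)),
      IsProbabilityMeasure π → π.map Prod.fst = ξ → π.map Prod.snd = ν →
      T2 μ ν ≤ ∫⁻ p, ENNReal.ofReal (‖p.1 - p.2‖ ^ 2) ∂π := by
    intro π hπ h1 h2
    by_cases htop : ∫⁻ p, ENNReal.ofReal (‖p.1 - p.2‖ ^ 2) ∂π = ⊤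
    · rw [htop]; exact le_top
    have hcostm : Measurable (fun p : EuclideanSpace ℝ (Fin d) × EuclideanSpace ℝ (Fin d) =>
        ‖p.1 - p.2‖ ^ 2) := (measurable_fst.sub measurable_snd).norm.pow_const 2
    have hcost_int : Integrable (fun p => ‖p.1 - p.2‖ ^ 2) π := by
      refine ⟨hcostm.aestronglyMeasurable, ?_⟩
      rw [hasFiniteIntegral_iff_norm]
      have he : ∀ p : EuclideanSpace ℝ (Fin d) × EuclideanSpace ℝ (Fin d),
          ENNReal.ofReal ‖‖p.1 - p.2‖ ^ 2‖ = ENNReal.ofReal (‖p.1 - p.2‖ ^ 2) := fun p => by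
        rw [Real.norm_eq_abs, abs_of_nonneg (by positivity)]
      rw [lintegral_congr he]
      exact lt_top_iff_ne_top.mpr htop
    have hψξπ : Integrable (fun p => ψ p.1) π := by
      have h' : Integrable ψ (π.map Prod.fst) := h1.symm ▸ hψξ
      simpa [Function.comp_def] using
        (integrable_map_measure hψcont.aestronglyMeasurable measurable_fst.aemeasurable).mp h'
    have hψφν : Integrable (fun y => ψ (gradient φ y)) ν := by
      have h' : Integrable ψ (ν.map (gradient φ)) := by rw [hmap]; exact hψμ
      simpa [Function.comp_def] using
        (integrable_map_measure hψcont.aestronglyMeasurable hgradm.aemeasurable).mp h'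
    have hBπ : Integrable (fun p => ψ (gradient φ p.2)) π := by
      have h' : Integrable (fun y => ψ (gradient φ y)) (π.map Prod.snd) := h2.symm ▸ hψφν
      simpa [Function.comp_def] using
        (integrable_map_measure (hψcont.measurable.comp hgradm).aestronglyMeasurable
          measurable_snd.aemeasurable).mp h'
    have hDmeas : MeasurableSet {y : EuclideanSpace ℝ (Fin d) | DifferentiableAt ℝ φ y} :=
      measurableSet_of_differentiableAt ℝ φ
    have hdiffπ : ∀ᵐ p ∂π, DifferentiableAt ℝ φ p.2 := by
      have h' : ∀ᵐ y ∂(π.map Prod.snd), DifferentiableAt ℝ φ y := h2.symm ▸ hdiffν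
      exact (ae_map_iff measurable_snd.aemeasurable hDmeas).mp h'
    have hpt : ∀ᵐ p ∂π, ‖gradient φ p.2 - p.2‖^2 + ψ p.1 ≤ ‖p.1 - p.2‖^2 + ψ (gradient φ p.2) := by
      filter_upwards [hdiffπ] with p hp
      have e1 : fstar φ (gradient φ p.2) ≤ ⟪gradient φ p.2, p.2⟫ - φ p.2 := by
        refine ciSup_le fun z => ?_
        have := subgrad hφconv hp z
        rw [inner_sub_right] at this; linarith
      have e2 : ⟪p.1, p.2⟫ - φ p.2 ≤ fstar φ p.1 := le_fstar hmin p.1 p.2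
      have hxy : ‖p.1 - p.2‖^2 = ‖p.1‖^2 - 2*⟪p.1,p.2⟫ + ‖p.2‖^2 := by
        rw [norm_sub_sq_real]
      have huy : ‖gradient φ p.2 - p.2‖^2
          = ‖gradient φ p.2‖^2 - 2*⟪gradient φ p.2, p.2⟫ + ‖p.2‖^2 := by
        rw [norm_sub_sq_real]
      simp only [hψdef]
      rw [hxy, huy]
      linarith
    have hf2m : Measurable (fun p : EuclideanSpace ℝ (Fin d) × EuclideanSpace ℝ (Fin d) =>
        ‖gradient φ p.2 - p.2‖^2) := ((hgradm.comp measurable_snd).sub measurable_snd).norm.pow_const 2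
    have hf2π : Integrable (fun p => ‖gradient φ p.2 - p.2‖^2) π := by
      refine Integrable.mono' (hcost_int.add (hBπ.abs.add hψξπ.abs)) hf2m.aestronglyMeasurable ?_
      filter_upwards [hpt] with p hp
      rw [Real.norm_eq_abs, abs_of_nonneg (by positivity)]
      have h3 : ψ (gradient φ p.2) ≤ |ψ (gradient φ p.2)| := le_abs_self _
      have h4 : -(|ψ p.1|) ≤ ψ p.1 := neg_abs_le _
      simp only [Pi.add_apply]; linarith
    have hIψμ : ∫ p, ψ (gradient φ p.2) ∂π = ∫ x, ψ x ∂μ := by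
      have s1 : ∫ p, ψ (gradient φ p.2) ∂π = ∫ y, ψ (gradient φ y) ∂ν := by
        rw [← h2]
        exact (integral_map measurable_snd.aemeasurable
          (hψcont.measurable.comp hgradm).aestronglyMeasurable).symm
      have s2 : ∫ y, ψ (gradient φ y) ∂ν = ∫ x, ψ x ∂μ := by
        rw [← hmap]
        exact (integral_map hgradm.aemeasurable hψcont.aestronglyMeasurable).symm
      rw [s1, s2]
    have hIψξ : ∫ p, ψ p.1 ∂π = ∫ x, ψ x ∂ξ := by
      rw [← h1]
      exact (integral_map measurable_fst.aemeasurable hψcont.aestronglyMeasurable).symm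
    have hIf2 : ∫ p, ‖gradient φ p.2 - p.2‖^2 ∂π = ∫ y, ‖gradient φ y - y‖^2 ∂ν := by
      rw [← h2]
      exact (integral_map measurable_snd.aemeasurable hf2ym.aestronglyMeasurable).symm
    have hmain : ∫ p, (‖gradient φ p.2 - p.2‖^2 + ψ p.1) ∂π
        ≤ ∫ p, (‖p.1 - p.2‖^2 + ψ (gradient φ p.2)) ∂π :=
      integral_mono_ae (hf2π.add hψξπ) (hcost_int.add hBπ) hpt
    rw [integral_add hf2π hψξπ, integral_add hcost_int hBπ, hIψξ, hIψμ, hIf2] at hmain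
    have hreal : ∫ y, ‖gradient φ y - y‖^2 ∂ν ≤ ∫ p, ‖p.1 - p.2‖^2 ∂π := by linarith
    have hf2ν : Integrable (fun y => ‖gradient φ y - y‖^2) ν := by
      have h' : Integrable (fun y => ‖gradient φ y - y‖^2) (π.map Prod.snd) := by
        refine (integrable_map_measure hf2ym.aestronglyMeasurable
          measurable_snd.aemeasurable).mpr ?_
        simpa [Function.comp_def] using hf2π
      rwa [h2] at h'
    calc T2 μ ν ≤ ∫⁻ y, ENNReal.ofReal (‖gradient φ y - y‖^2) ∂ν := upper
      _ = ENNReal.ofReal (∫ y, ‖gradient φ y - y‖^2 ∂ν) :=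
        (ofReal_integral_eq_lintegral_ofReal hf2ν
          (Filter.Eventually.of_forall fun y => by positivity)).symm
      _ ≤ ENNReal.ofReal (∫ p, ‖p.1 - p.2‖^2 ∂π) := ENNReal.ofReal_le_ofReal hreal
      _ = ∫⁻ p, ENNReal.ofReal (‖p.1 - p.2‖ ^ 2) ∂π :=
        ofReal_integral_eq_lintegral_ofReal hcost_int
          (Filter.Eventually.of_forall fun p => by positivity)
  rw [T2]
  exact le_iInf fun π => le_iInf fun h1 => le_iInf fun h2 => le_iInf fun h3 => hle π h1 h2 h3

/-- Theorem 7.7 (thm_cx_exp), (ii) ⇒ (i): if `μ` is the image of `ν` under the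
gradient of a convex expansion, then the forward convex order projection of `ν`
onto `P^{cx}_{2,μ≤}` is `μ` itself. -/
theorem stmt_18 {d : ℕ} (μ ν : Measure (EuclideanSpace ℝ (Fin d)))
    [IsProbabilityMeasure μ] [IsProbabilityMeasure ν]
    (hμ2 : Integrable (fun x => ‖x‖ ^ 2) μ)
    (hν2 : Integrable (fun x => ‖x‖ ^ 2) ν)
    (hνac : ν ≪ volume)
    (φ : EuclideanSpace ℝ (Fin d) → ℝ)
    (hφconv : ConvexOn ℝ Set.univ φ) (hφlsc : LowerSemicontinuous φ)
    (hexp : ConvexOn ℝ Set.univ (fun x => φ x - (1 / 2 : ℝ) * ‖x‖ ^ 2))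
    (hmap : Measure.map (gradient φ) ν = μ) :
    T2 μ ν = ⨅ (ξ : Measure (EuclideanSpace ℝ (Fin d)))
      (_ : IsProbabilityMeasure ξ) (_ : Integrable (fun x => ‖x‖ ^ 2) ξ)
      (_ : CxOrder μ ξ), T2 ξ ν := by
  refine le_antisymm ?_ ?_
  · refine le_iInf fun ξ => le_iInf fun h1 => le_iInf fun h2 => le_iInf fun h3 => ?_
    exact @key_le d μ ν ‹_› ‹_› hμ2 hνac φ hφconv hexp hmap ξ h1 h2 h3
  · exact iInf_le_of_le μ (iInf_le_of_le ‹IsProbabilityMeasure μ›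
      (iInf_le_of_le hμ2 (iInf_le_of_le (fun f _ _ => le_rfl) le_rfl)))
end
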